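/- Let f : ℝ → ℝ satisfy: (i) f belongs to the Newton class; (ii) the limits of f at +∞ and −∞ are infinite and of opposite signs (either f(x) → +∞ as x → +∞ and f(x) → −∞ as x → −∞, or vice versa); (iii) f has at least four real roots. Then the set of all real numbers a for which the iteration sequence (M_fⁿ(a))_{n∈ℕ} does not converge (to any real limit) is uncountable. -/

import Mathlib

/-- `f` belongs to the Newton class: `f` is twice continuously differentiable,
roots of `f` are simple, and roots of `f'` are simple. -/
def NewtonClass (f : ℝ → ℝ) : Prop :=
  ContDiff ℝ 2 f ∧ (∀ x, f x = 0 → deriv f x ≠ 0) ∧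
    (∀ x, deriv f x = 0 → deriv (deriv f) x ≠ 0)

/-- The classical Newton approximation function `N_f(x) = x - f(x)/f'(x)`. -/
noncomputable def newtonFun (f : ℝ → ℝ) (x : ℝ) : ℝ :=
  x - f x / deriv f x

/-- The modified Newton approximation function
`M_f(x) = N_f(x) - f(N_f(x))/f'(x)`. -/
noncomputable def modNewtonFun (f : ℝ → ℝ) (x : ℝ) : ℝ :=
  newtonFun f x - f (newtonFun f x) / deriv f x


open Filter Set Topology

/-! ### Auxiliary lemmas -/

lemma mynd_deriv_neg (f : ℝ → ℝ) : deriv (fun x => -f x) = fun x => -deriv f x :=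
  funext fun _ => deriv.neg

lemma mynd_newtonFun_neg (f : ℝ → ℝ) : newtonFun (fun x => -f x) = newtonFun f := by
  funext x
  unfold newtonFun
  rw [mynd_deriv_neg, neg_div_neg_eq]

lemma mynd_modNewtonFun_neg (f : ℝ → ℝ) : modNewtonFun (fun x => -f x) = modNewtonFun f := by
  funext x
  unfold modNewtonFun
  rw [mynd_newtonFun_neg, mynd_deriv_neg, neg_div_neg_eq]

lemma mynd_modNewtonFun_eq (f : ℝ → ℝ) (x : ℝ) :
    modNewtonFun f x = x + -((f x + f (newtonFun f x)) * (deriv f x)⁻¹) := by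
  unfold modNewtonFun newtonFun
  rw [add_mul, div_eq_mul_inv, div_eq_mul_inv]
  ring

lemma mynd_newtonFun_eq (f : ℝ → ℝ) (x : ℝ) :
    newtonFun f x = x + -(f x * (deriv f x)⁻¹) := by
  unfold newtonFun; rw [div_eq_mul_inv]; ring

lemma mynd_inv_zero_atBot : Tendsto (fun x : ℝ => x⁻¹) (𝓝[<] 0) atBot := by
  have h : Tendsto (fun x : ℝ => -x) (𝓝[<] (0:ℝ)) (𝓝[>] (0:ℝ)) := by
    rw [tendsto_nhdsWithin_iff]
    constructor
    · simpa using (continuous_neg.tendsto (0:ℝ)).mono_left nhdsWithin_le_nhds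
    · filter_upwards [self_mem_nhdsWithin] with x hx
      simpa using hx
  have h2 := tendsto_neg_atTop_atBot.comp (tendsto_inv_nhdsGT_zero.comp h)
  have h3 : (Neg.neg ∘ (fun x : ℝ => x⁻¹) ∘ fun x : ℝ => -x) = fun x : ℝ => x⁻¹ := by
    funext x; simp [Function.comp, inv_neg]
  rwa [h3] at h2

lemma mynd_continuousAt_mod {f : ℝ → ℝ} (hc : Continuous f) (hc' : Continuous (deriv f))
    {x : ℝ} (hx : deriv f x ≠ 0) : ContinuousAt (modNewtonFun f) x := by
  have hN : ContinuousAt (newtonFun f) x := by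
    have : ContinuousAt (fun y => y - f y / deriv f y) x :=
      continuousAt_id.sub (hc.continuousAt.div hc'.continuousAt hx)
    exact this
  have : ContinuousAt (fun y => newtonFun f y - f (newtonFun f y) / deriv f y) x :=
    hN.sub ((hc.continuousAt.comp hN).div hc'.continuousAt hx)
  exact this

/-- Main limit computation: case `c < 0` gives `M → -∞`. -/
lemma mynd_tendsto_mod_atBot {f : ℝ → ℝ}
    (htop : Tendsto f atTop atTop) (hbot : Tendsto f atBot atBot)
    {l : Filter ℝ} {e c : ℝ}
    (hinv : Tendsto (fun x => (deriv f x)⁻¹) l atTop ∨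
      Tendsto (fun x => (deriv f x)⁻¹) l atBot)
    (hfc : Tendsto f l (𝓝 c)) (hc0 : c < 0)
    (hx : Tendsto (fun x : ℝ => x) l (𝓝 e)) :
    Tendsto (modNewtonFun f) l atBot := by
  have key : Tendsto (fun x => (f x + f (newtonFun f x)) * (deriv f x)⁻¹) l atTop := by
    rcases hinv with hi | hi
    · have h1 : Tendsto (fun x => f x * (deriv f x)⁻¹) l atBot := hfc.neg_mul_atTop hc0 hi
      have hN : Tendsto (newtonFun f) l atTop := by
        have := hx.add_atTop (tendsto_neg_atBot_atTop.comp h1)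
        simpa [Function.comp, funext (mynd_newtonFun_eq f)] using this
      have hfN : Tendsto (fun x => f (newtonFun f x)) l atTop := htop.comp hN
      exact (hfc.add_atTop hfN).atTop_mul_atTop₀ hi
    · have h1 : Tendsto (fun x => f x * (deriv f x)⁻¹) l atTop := hfc.neg_mul_atBot hc0 hi
      have hN : Tendsto (newtonFun f) l atBot := by
        have := hx.add_atBot (tendsto_neg_atTop_atBot.comp h1)
        simpa [Function.comp, funext (mynd_newtonFun_eq f)] using this
      have hfN : Tendsto (fun x => f (newtonFun f x)) l atBot := hbot.comp hN
      exact (hfc.add_atBot hfN).atBot_mul_atBot₀ hi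
  have h2 := hx.add_atBot (tendsto_neg_atTop_atBot.comp key)
  exact Tendsto.congr (fun x => (mynd_modNewtonFun_eq f x).symm) h2

/-- Main limit computation: case `c > 0` gives `M → +∞`. -/
lemma mynd_tendsto_mod_atTop {f : ℝ → ℝ}
    (htop : Tendsto f atTop atTop) (hbot : Tendsto f atBot atBot)
    {l : Filter ℝ} {e c : ℝ}
    (hinv : Tendsto (fun x => (deriv f x)⁻¹) l atTop ∨
      Tendsto (fun x => (deriv f x)⁻¹) l atBot)
    (hfc : Tendsto f l (𝓝 c)) (hc0 : 0 < c)
    (hx : Tendsto (fun x : ℝ => x) l (𝓝 e)) :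
    Tendsto (modNewtonFun f) l atTop := by
  have key : Tendsto (fun x => (f x + f (newtonFun f x)) * (deriv f x)⁻¹) l atBot := by
    rcases hinv with hi | hi
    · have h1 : Tendsto (fun x => f x * (deriv f x)⁻¹) l atTop := hfc.pos_mul_atTop hc0 hi
      have hN : Tendsto (newtonFun f) l atBot := by
        have := hx.add_atBot (tendsto_neg_atTop_atBot.comp h1)
        simpa [Function.comp, funext (mynd_newtonFun_eq f)] using this
      have hfN : Tendsto (fun x => f (newtonFun f x)) l atBot := hbot.comp hN
      exact (hfc.add_atBot hfN).atBot_mul_atTop₀ hi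
    · have h1 : Tendsto (fun x => f x * (deriv f x)⁻¹) l atBot := hfc.pos_mul_atBot hc0 hi
      have hN : Tendsto (newtonFun f) l atTop := by
        have := hx.add_atTop (tendsto_neg_atBot_atTop.comp h1)
        simpa [Function.comp, funext (mynd_newtonFun_eq f)] using this
      have hfN : Tendsto (fun x => f (newtonFun f x)) l atTop := htop.comp hN
      exact (hfc.add_atTop hfN).atTop_mul_atBot₀ hi
  have h2 := hx.add_atTop (tendsto_neg_atBot_atTop.comp key)
  exact Tendsto.congr (fun x => (mynd_modNewtonFun_eq f x).symm) h2

/-- On a maximal monotonicity interval around a root, `M_f` is continuous and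
takes every real value. -/
lemma mynd_key_interval {f : ℝ → ℝ}
    (hC : ContDiff ℝ 2 f)
    (htop : Tendsto f atTop atTop) (hbot : Tendsto f atBot atBot)
    {α β r : ℝ} (hr : r ∈ Ioo α β) (hfr : f r = 0)
    (hα : deriv f α = 0) (hβ : deriv f β = 0)
    (hne : ∀ x ∈ Ioo α β, deriv f x ≠ 0) :
    ContinuousOn (modNewtonFun f) (Ioo α β) ∧
      (∀ y : ℝ, ∃ x ∈ Ioo α β, modNewtonFun f x = y) := by
  have hαβ : α < β := lt_trans hr.1 hr.2
  have hcf : Continuous f := hC.continuous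
  have hcf' : Continuous (deriv f) := hC.continuous_deriv (by norm_num)
  have hcont : ContinuousOn (modNewtonFun f) (Ioo α β) := fun x hx =>
    (mynd_continuousAt_mod hcf hcf' (hne x hx)).continuousWithinAt
  refine ⟨hcont, ?_⟩
  -- the sign of f' is constant on the interval
  have hsign : (∀ x ∈ Ioo α β, 0 < deriv f x) ∨ (∀ x ∈ Ioo α β, deriv f x < 0) := by
    have hdich : ∀ x ∈ Ioo α β, ∀ y ∈ Ioo α β, 0 < deriv f x → 0 < deriv f y := by
      intro x hx y hy hfx
      rcases lt_or_ge 0 (deriv f y) with h | h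
      · exact h
      · exfalso
        have hy' : deriv f y < 0 := lt_of_le_of_ne h (hne y hy)
        have hsub : uIcc y x ⊆ Ioo α β := ordConnected_Ioo.uIcc_subset hy hx
        have h0 : (0:ℝ) ∈ uIcc (deriv f y) (deriv f x) := by
          rw [uIcc_of_le (le_of_lt (lt_trans hy' hfx))]
          exact ⟨le_of_lt hy', le_of_lt hfx⟩
        obtain ⟨z, hz, hz0⟩ := intermediate_value_uIcc (hcf'.continuousOn (s := uIcc y x)) h0
        exact hne z (hsub hz) hz0
    rcases lt_or_ge 0 (deriv f r) with h | h
    · exact Or.inl (fun x hx => hdich r hr x hx h)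
    · have h' : deriv f r < 0 := lt_of_le_of_ne h (hne r hr)
      right
      intro x hx
      rcases lt_or_ge 0 (deriv f x) with h2 | h2
      · exact absurd (hdich x hx r hr h2) (not_lt.mpr (le_of_lt h'))
      · exact lt_of_le_of_ne h2 (hne x hx)
  -- basic tendsto facts at the endpoints
  have hIooα : Ioo α β ∈ 𝓝[>] α := Ioo_mem_nhdsGT_of_mem ⟨le_refl α, hαβ⟩
  have hIooβ : Ioo α β ∈ 𝓝[<] β := Ioo_mem_nhdsLT_of_mem ⟨hαβ, le_refl β⟩
  have hxα : Tendsto (fun x : ℝ => x) (𝓝[>] α) (𝓝 α) :=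
    tendsto_id.mono_left nhdsWithin_le_nhds
  have hxβ : Tendsto (fun x : ℝ => x) (𝓝[<] β) (𝓝 β) :=
    tendsto_id.mono_left nhdsWithin_le_nhds
  have hfα : Tendsto f (𝓝[>] α) (𝓝 (f α)) :=
    (hcf.tendsto α).mono_left nhdsWithin_le_nhds
  have hfβ : Tendsto f (𝓝[<] β) (𝓝 (f β)) :=
    (hcf.tendsto β).mono_left nhdsWithin_le_nhds
  have hf'α : Tendsto (deriv f) (𝓝[>] α) (𝓝 0) := by
    have := (hcf'.tendsto α).mono_left (nhdsWithin_le_nhds (s := Ioi α))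
    rwa [hα] at this
  have hf'β : Tendsto (deriv f) (𝓝[<] β) (𝓝 0) := by
    have := (hcf'.tendsto β).mono_left (nhdsWithin_le_nhds (s := Iio β))
    rwa [hβ] at this
  -- main case analysis
  have main : Tendsto (modNewtonFun f) (𝓝[>] α) atBot ∧
      Tendsto (modNewtonFun f) (𝓝[<] β) atTop ∨
      Tendsto (modNewtonFun f) (𝓝[>] α) atTop ∧
      Tendsto (modNewtonFun f) (𝓝[<] β) atBot := by
    rcases hsign with hpos | hneg
    · -- f is strictly increasing on [α, β]
      have hmono : StrictMonoOn f (Icc α β) := by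
        apply strictMonoOn_of_deriv_pos (convex_Icc α β) (hcf.continuousOn)
        intro x hx
        rw [interior_Icc] at hx
        exact hpos x hx
      have hfα0 : f α < 0 := by
        have := hmono ⟨le_refl α, le_of_lt hαβ⟩ ⟨le_of_lt hr.1, le_of_lt hr.2⟩ hr.1
        rwa [hfr] at this
      have hfβ0 : 0 < f β := by
        have := hmono ⟨le_of_lt hr.1, le_of_lt hr.2⟩ ⟨le_of_lt hαβ, le_refl β⟩ hr.2
        rwa [hfr] at this
      have hinvα : Tendsto (fun x => (deriv f x)⁻¹) (𝓝[>] α) atTop := by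
        apply tendsto_inv_nhdsGT_zero.comp
        rw [tendsto_nhdsWithin_iff]
        refine ⟨hf'α, ?_⟩
        filter_upwards [hIooα] with x hx
        exact hpos x hx
      have hinvβ : Tendsto (fun x => (deriv f x)⁻¹) (𝓝[<] β) atTop := by
        apply tendsto_inv_nhdsGT_zero.comp
        rw [tendsto_nhdsWithin_iff]
        refine ⟨hf'β, ?_⟩
        filter_upwards [hIooβ] with x hx
        exact hpos x hx
      exact Or.inl ⟨mynd_tendsto_mod_atBot htop hbot (Or.inl hinvα) hfα hfα0 hxα,
        mynd_tendsto_mod_atTop htop hbot (Or.inl hinvβ) hfβ hfβ0 hxβ⟩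
    · -- f is strictly decreasing on [α, β]
      have hmono : StrictAntiOn f (Icc α β) := by
        apply strictAntiOn_of_deriv_neg (convex_Icc α β) (hcf.continuousOn)
        intro x hx
        rw [interior_Icc] at hx
        exact hneg x hx
      have hfα0 : 0 < f α := by
        have := hmono ⟨le_refl α, le_of_lt hαβ⟩ ⟨le_of_lt hr.1, le_of_lt hr.2⟩ hr.1
        rwa [hfr] at this
      have hfβ0 : f β < 0 := by
        have := hmono ⟨le_of_lt hr.1, le_of_lt hr.2⟩ ⟨le_of_lt hαβ, le_refl β⟩ hr.2
        rwa [hfr] at this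
      have hinvα : Tendsto (fun x => (deriv f x)⁻¹) (𝓝[>] α) atBot := by
        apply mynd_inv_zero_atBot.comp
        rw [tendsto_nhdsWithin_iff]
        refine ⟨hf'α, ?_⟩
        filter_upwards [hIooα] with x hx
        exact hneg x hx
      have hinvβ : Tendsto (fun x => (deriv f x)⁻¹) (𝓝[<] β) atBot := by
        apply mynd_inv_zero_atBot.comp
        rw [tendsto_nhdsWithin_iff]
        refine ⟨hf'β, ?_⟩
        filter_upwards [hIooβ] with x hx
        exact hneg x hx
      exact Or.inr ⟨mynd_tendsto_mod_atTop htop hbot (Or.inr hinvα) hfα hfα0 hxα,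
        mynd_tendsto_mod_atBot htop hbot (Or.inr hinvβ) hfβ hfβ0 hxβ⟩
  -- extract unboundedness in both directions
  have hboth : ∀ y : ℝ, (∃ x ∈ Ioo α β, modNewtonFun f x ≤ y) ∧
      (∃ x ∈ Ioo α β, y ≤ modNewtonFun f x) := by
    intro y
    have getlo : ∀ (l : Filter ℝ) [l.NeBot], Ioo α β ∈ l →
        Tendsto (modNewtonFun f) l atBot → ∃ x ∈ Ioo α β, modNewtonFun f x ≤ y := by
      intro l _ hmem hT
      have h1 : ∀ᶠ x in l, modNewtonFun f x ≤ y := hT.eventually (eventually_le_atBot y)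
      exact (h1.and (eventually_of_mem hmem (fun x hx => hx))).exists.imp
        (fun x hx => ⟨hx.2, hx.1⟩)
    have gethi : ∀ (l : Filter ℝ) [l.NeBot], Ioo α β ∈ l →
        Tendsto (modNewtonFun f) l atTop → ∃ x ∈ Ioo α β, y ≤ modNewtonFun f x := by
      intro l _ hmem hT
      have h1 : ∀ᶠ x in l, y ≤ modNewtonFun f x := hT.eventually (eventually_ge_atTop y)
      exact (h1.and (eventually_of_mem hmem (fun x hx => hx))).exists.imp
        (fun x hx => ⟨hx.2, hx.1⟩)
    rcases main with ⟨h1, h2⟩ | ⟨h1, h2⟩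
    · exact ⟨getlo _ hIooα h1, gethi _ hIooβ h2⟩
    · exact ⟨getlo _ hIooβ h2, gethi _ hIooα h1⟩
  -- intermediate value theorem
  intro y
  obtain ⟨⟨x₁, hx₁, hy₁⟩, ⟨x₂, hx₂, hy₂⟩⟩ := hboth y
  have hsub : uIcc x₁ x₂ ⊆ Ioo α β := ordConnected_Ioo.uIcc_subset hx₁ hx₂
  have hy : y ∈ uIcc (modNewtonFun f x₁) (modNewtonFun f x₂) := by
    rw [uIcc_of_le (le_trans hy₁ hy₂)]
    exact ⟨hy₁, hy₂⟩
  obtain ⟨x, hx, hxy⟩ := intermediate_value_uIcc (hcont.mono hsub) hy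
  exact ⟨x, hsub hx, hxy⟩

/-- Abstract horseshoe lemma: a map taking every real value on each of two
ordered intervals has an uncountable set of non-convergent points. -/
lemma mynd_horseshoe {g : ℝ → ℝ} {α β γ δ : ℝ}
    (hαβ : α < β) (hβγ : β ≤ γ) (hγδ : γ < δ)
    (hc0 : ContinuousOn g (Ioo α β)) (hc1 : ContinuousOn g (Ioo γ δ))
    (hs0 : ∀ y : ℝ, ∃ x ∈ Ioo α β, g x = y)
    (hs1 : ∀ y : ℝ, ∃ x ∈ Ioo γ δ, g x = y) :
    ¬ Set.Countable {a : ℝ | ¬ ∃ L : ℝ, Tendsto (fun n => g^[n] a) atTop (𝓝 L)} := by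
  classical
  have hαδ : α ≤ δ := le_trans (le_of_lt hαβ) (le_trans hβγ (le_of_lt hγδ))
  obtain ⟨x₁, hx₁, hgx₁⟩ := hs0 α
  obtain ⟨x₂, hx₂, hgx₂⟩ := hs0 δ
  obtain ⟨y₁, hy₁, hgy₁⟩ := hs1 α
  obtain ⟨y₂, hy₂, hgy₂⟩ := hs1 δ
  set K0 : Set ℝ := uIcc x₁ x₂ with hK0def
  set K1 : Set ℝ := uIcc y₁ y₂ with hK1def
  have hK0sub : K0 ⊆ Ioo α β := ordConnected_Ioo.uIcc_subset hx₁ hx₂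
  have hK1sub : K1 ⊆ Ioo γ δ := ordConnected_Ioo.uIcc_subset hy₁ hy₂
  have hK0Icc : K0 ⊆ Icc α δ := fun z hz =>
    ⟨le_of_lt (hK0sub hz).1, le_of_lt (lt_of_lt_of_le (hK0sub hz).2 (le_trans hβγ (le_of_lt hγδ)))⟩
  have hK1Icc : K1 ⊆ Icc α δ := fun z hz =>
    ⟨le_of_lt (lt_of_le_of_lt (le_trans (le_of_lt hαβ) hβγ) (hK1sub hz).1), le_of_lt (hK1sub hz).2⟩
  have hdisj : ∀ z : ℝ, z ∈ K0 → z ∈ K1 → False := fun z h0 h1 =>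
    absurd (lt_of_lt_of_le (hK0sub h0).2 hβγ) (not_lt.mpr (le_of_lt (hK1sub h1).1))
  have cover0 : Icc α δ ⊆ g '' K0 := by
    have := intermediate_value_uIcc (hc0.mono hK0sub)
    rw [hgx₁, hgx₂, uIcc_of_le hαδ] at this
    exact this
  have cover1 : Icc α δ ⊆ g '' K1 := by
    have := intermediate_value_uIcc (hc1.mono hK1sub)
    rw [hgy₁, hgy₂, uIcc_of_le hαδ] at this
    exact this
  -- the symbol sets
  set Ks : Bool → Set ℝ := fun b => if b then K1 else K0 with hKsdef
  have hKscomp : ∀ b, IsCompact (Ks b) := by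
    intro b; cases b <;> simp [hKsdef] <;> exact isCompact_uIcc
  have hKsclosed : ∀ b, IsClosed (Ks b) := fun b => (hKscomp b).isClosed
  have hKsIcc : ∀ b, Ks b ⊆ Icc α δ := by
    intro b; cases b <;> simpa [hKsdef] using (by first | exact hK0Icc | exact hK1Icc)
  have hKscover : ∀ b, Icc α δ ⊆ g '' Ks b := by
    intro b; cases b <;> simp [hKsdef] <;> first | exact cover0 | exact cover1
  have hKscont : ∀ b, ContinuousOn g (Ks b) := by
    intro b; cases b
    · simpa [hKsdef] using hc0.mono hK0sub
    · simpa [hKsdef] using hc1.mono hK1sub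
  have hKsT : Ks true = K1 := rfl
  have hKsF : Ks false = K0 := rfl
  have hKsne : ∀ b, (Ks b).Nonempty := by
    intro b; cases b
    · exact ⟨x₁, by rw [hKsF]; exact left_mem_uIcc⟩
    · exact ⟨y₁, by rw [hKsT]; exact left_mem_uIcc⟩
  -- existence of points with prescribed itinerary
  have itin : ∀ s : ℕ → Bool, ∃ x : ℝ, ∀ n, g^[n] x ∈ Ks (s n) := by
    intro s
    set B : ℕ → Set ℝ := fun n => {x | ∀ k ≤ n, g^[k] x ∈ Ks (s k)} with hBdef
    have hBmono : ∀ n, B (n + 1) ⊆ B n := fun n x hx k hk => hx k (le_trans hk (Nat.le_succ n))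
    have hBeq : ∀ n, B (n + 1) = B n ∩ g^[n + 1] ⁻¹' Ks (s (n + 1)) := by
      intro n
      ext x
      constructor
      · exact fun hx => ⟨hBmono n hx, hx (n + 1) le_rfl⟩
      · rintro ⟨hx1, hx2⟩ k hk
        rcases lt_or_eq_of_le hk with h | h
        · exact hx1 k (Nat.lt_succ_iff.mp h)
        · rw [h]; exact hx2
    -- compactness and continuity along the tower
    have hBc : ∀ n, IsCompact (B n) ∧ ContinuousOn (g^[n]) (B n) := by
      intro n
      induction n with
      | zero =>
        have : B 0 = Ks (s 0) := by
          ext x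
          simp [hBdef, Nat.le_zero]
        rw [this]
        exact ⟨hKscomp (s 0), by simpa using continuousOn_id⟩
      | succ n ih =>
        obtain ⟨hcomp, hcont⟩ := ih
        have hmaps : MapsTo (g^[n]) (B n) (Ks (s n)) := fun x hx => hx n le_rfl
        have hgn1 : ContinuousOn (g^[n + 1]) (B n) := by
          rw [Function.iterate_succ']
          exact (hKscont (s n)).comp hcont hmaps
        have hclosed : IsClosed (B (n + 1)) := by
          rw [hBeq n]
          exact hgn1.preimage_isClosed_of_isClosed hcomp.isClosed (hKsclosed _)
        have hcomp1 : IsCompact (B (n + 1)) :=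
          IsCompact.of_isClosed_subset hcomp hclosed (hBmono n)
        exact ⟨hcomp1, hgn1.mono (hBmono n)⟩
    -- nonemptiness
    have hQ : ∀ n, ∀ y ∈ Icc α δ, ∃ x : ℝ,
        (∀ k < n, g^[k] x ∈ Ks (s k)) ∧ g^[n] x = y := by
      intro n
      induction n with
      | zero => exact fun y _ => ⟨y, fun k hk => absurd hk (Nat.not_lt_zero k), rfl⟩
      | succ n ih =>
        intro y hy
        obtain ⟨z, hz, hgz⟩ := hKscover (s n) hy
        obtain ⟨x, hx1, hx2⟩ := ih z (hKsIcc (s n) hz)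
        refine ⟨x, ?_, ?_⟩
        · intro k hk
          rcases lt_or_eq_of_le (Nat.lt_succ_iff.mp hk) with h | h
          · exact hx1 k h
          · rw [h, hx2]; exact hz
        · rw [Function.iterate_succ', Function.comp_apply, hx2, hgz]
    have hBne : ∀ n, (B n).Nonempty := by
      intro n
      obtain ⟨y, hy⟩ := hKsne (s n)
      obtain ⟨x, hx1, hx2⟩ := hQ n y (hKsIcc (s n) hy)
      refine ⟨x, fun k hk => ?_⟩
      rcases lt_or_eq_of_le hk with h | h
      · exact hx1 k h
      · rw [h, hx2]; exact hy
    obtain ⟨x, hx⟩ := IsCompact.nonempty_iInter_of_sequence_nonempty_isCompact_isClosed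
      B hBmono hBne (hBc 0).1 (fun n => ((hBc n).1).isClosed)
    refine ⟨x, fun n => ?_⟩
    exact (mem_iInter.mp hx n) n le_rfl
  choose F hF using itin
  -- the embedded itineraries
  set σ : (ℕ → Bool) → (ℕ → Bool) :=
    fun t n => if n % 2 = 0 then t (n / 2) else decide ((n / 2) % 2 = 0) with hσdef
  have hσinj : Function.Injective σ := by
    intro t t' h
    funext k
    have := congrFun h (2 * k)
    simpa [hσdef, Nat.mul_mod_right, Nat.mul_div_cancel_left k (by norm_num : 0 < 2)] using this
  have hFinj : ∀ t t' : ℕ → Bool, F (σ t) = F (σ t') → t = t' := by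
    intro t t' h
    apply hσinj
    funext n
    by_contra hne
    have h1 := hF (σ t) n
    have h2 := hF (σ t') n
    rw [h] at h1
    cases hb : σ t n <;> cases hb' : σ t' n <;> rw [hb] at h1 hne <;> rw [hb'] at h2 hne
    · exact hne rfl
    · exact hdisj _ (by simpa [hKsdef] using h1) (by simpa [hKsdef] using h2)
    · exact hdisj _ (by simpa [hKsdef] using h2) (by simpa [hKsdef] using h1)
    · exact hne rfl
  -- points with embedded itineraries do not converge
  have hdiv : ∀ t : ℕ → Bool,
      ¬ ∃ L : ℝ, Tendsto (fun n => g^[n] (F (σ t))) atTop (𝓝 L) := by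
    rintro t ⟨L, hL⟩
    have hfreq1 : ∃ᶠ n in atTop, g^[n] (F (σ t)) ∈ K1 := by
      rw [frequently_atTop]
      intro N
      refine ⟨4 * N + 1, by omega, ?_⟩
      have := hF (σ t) (4 * N + 1)
      have he : σ t (4 * N + 1) = true := by
        have h1 : (4 * N + 1) % 2 = 1 := by omega
        have h2 : (4 * N + 1) / 2 = 2 * N := by omega
        have h3 : (2 * N) % 2 = 0 := by omega
        simp [hσdef, h1, h2, h3]
      rwa [he] at this
    have hfreq0 : ∃ᶠ n in atTop, g^[n] (F (σ t)) ∈ K0 := by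
      rw [frequently_atTop]
      intro N
      refine ⟨4 * N + 3, by omega, ?_⟩
      have := hF (σ t) (4 * N + 3)
      have he : σ t (4 * N + 3) = false := by
        have h1 : (4 * N + 3) % 2 = 1 := by omega
        have h2 : (4 * N + 3) / 2 = 2 * N + 1 := by omega
        have h3 : (2 * N + 1) % 2 = 1 := by omega
        simp [hσdef, h1, h2, h3]
      rwa [he] at this
    have hL1 : L ∈ K1 := by
      have := mem_closure_of_frequently_of_tendsto hfreq1 hL
      rwa [(isCompact_uIcc.isClosed : IsClosed K1).closure_eq] at this
    have hL0 : L ∈ K0 := by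
      have := mem_closure_of_frequently_of_tendsto hfreq0 hL
      rwa [(isCompact_uIcc.isClosed : IsClosed K0).closure_eq] at this
    exact hdisj L hL0 hL1
  -- conclude uncountability
  intro hcount
  have hc2 : Countable {a : ℝ | ¬ ∃ L : ℝ, Tendsto (fun n => g^[n] a) atTop (𝓝 L)} :=
    hcount.to_subtype
  have hG : Function.Injective (fun t : ℕ → Bool =>
      (⟨F (σ t), hdiv t⟩ : {a : ℝ | ¬ ∃ L : ℝ, Tendsto (fun n => g^[n] a) atTop (𝓝 L)})) := by
    intro t t' h
    exact hFinj t t' (congrArg Subtype.val h)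
  have : Countable (ℕ → Bool) := hG.countable
  have hSet : Countable (Set ℕ) := by
    have hinj : Function.Injective (fun (S : Set ℕ) (n : ℕ) => decide (n ∈ S)) := by
      intro S T h
      ext n
      have := congrFun h n
      simpa using this
    exact hinj.countable
  obtain ⟨e, he⟩ := exists_injective_nat (Set ℕ)
  exact Function.cantor_injective e he

/-- Construction of a maximal monotonicity interval around a root `r` which has
critical points on both sides. -/
lemma mynd_interval_around_root {f : ℝ → ℝ} (hcf' : Continuous (deriv f))
    {c c' r : ℝ} (hcr : c < r) (hrc' : r < c')
    (hc : deriv f c = 0) (hc' : deriv f c' = 0) (hr : deriv f r ≠ 0) :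
    ∃ α β : ℝ, c ≤ α ∧ α < r ∧ r < β ∧ β ≤ c' ∧ deriv f α = 0 ∧ deriv f β = 0 ∧
      ∀ x ∈ Ioo α β, deriv f x ≠ 0 := by
  set S1 : Set ℝ := Icc c r ∩ deriv f ⁻¹' {0} with hS1def
  set S2 : Set ℝ := Icc r c' ∩ deriv f ⁻¹' {0} with hS2def
  have hS1closed : IsClosed S1 := isClosed_Icc.inter (isClosed_singleton.preimage hcf')
  have hS2closed : IsClosed S2 := isClosed_Icc.inter (isClosed_singleton.preimage hcf')
  have hS1ne : S1.Nonempty := ⟨c, ⟨le_refl c, le_of_lt hcr⟩, hc⟩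
  have hS2ne : S2.Nonempty := ⟨c', ⟨le_of_lt hrc', le_refl c'⟩, hc'⟩
  have hS1bdd : BddAbove S1 := bddAbove_Icc.mono inter_subset_left
  have hS2bdd : BddBelow S2 := bddBelow_Icc.mono inter_subset_left
  set α := sSup S1 with hαdef
  set β := sInf S2 with hβdef
  have hαmem : α ∈ S1 := hS1closed.csSup_mem hS1ne hS1bdd
  have hβmem : β ∈ S2 := hS2closed.csInf_mem hS2ne hS2bdd
  have hαr : α < r := lt_of_le_of_ne hαmem.1.2 (fun h => hr (h ▸ hαmem.2))
  have hrβ : r < β := lt_of_le_of_ne hβmem.1.1 (fun h => hr (h ▸ hβmem.2))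
  refine ⟨α, β, hαmem.1.1, hαr, hrβ, hβmem.1.2, hαmem.2, hβmem.2, ?_⟩
  intro x hx hx0
  rcases le_or_gt x r with h | h
  · have hxS1 : x ∈ S1 := ⟨⟨le_trans hαmem.1.1 (le_of_lt hx.1), h⟩, hx0⟩
    exact absurd (le_csSup hS1bdd hxS1) (not_le.mpr hx.1)
  · have hxS2 : x ∈ S2 := ⟨⟨le_of_lt h, le_trans (le_of_lt hx.2) hβmem.1.2⟩, hx0⟩
    exact absurd (csInf_le hS2bdd hxS2) (not_le.mpr hx.2)

/-- The main theorem in the case `f → +∞` at `+∞` and `f → -∞` at `-∞`. -/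
lemma mynd_main_case1 {f : ℝ → ℝ}
    (hC : ContDiff ℝ 2 f) (h2 : ∀ x, f x = 0 → deriv f x ≠ 0)
    (htop : Tendsto f atTop atTop) (hbot : Tendsto f atBot atBot)
    (hroots : ∃ r₁ r₂ r₃ r₄ : ℝ, r₁ < r₂ ∧ r₂ < r₃ ∧ r₃ < r₄ ∧
      f r₁ = 0 ∧ f r₂ = 0 ∧ f r₃ = 0 ∧ f r₄ = 0) :
    ¬ Set.Countable
      {a : ℝ | ¬ ∃ L : ℝ,
        Tendsto (fun n => (modNewtonFun f)^[n] a) atTop (𝓝 L)} := by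
  obtain ⟨r₁, r₂, r₃, r₄, h12, h23, h34, hf1, hf2, hf3, hf4⟩ := hroots
  have hcf : Continuous f := hC.continuous
  have hcf' : Continuous (deriv f) := hC.continuous_deriv (by norm_num)
  -- critical points between consecutive roots, by Rolle
  obtain ⟨c₁, hc₁mem, hc₁⟩ :=
    exists_deriv_eq_zero h12 (hcf.continuousOn) (hf1.trans hf2.symm)
  obtain ⟨c₂, hc₂mem, hc₂⟩ :=
    exists_deriv_eq_zero h23 (hcf.continuousOn) (hf2.trans hf3.symm)
  obtain ⟨c₃, hc₃mem, hc₃⟩ :=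
    exists_deriv_eq_zero h34 (hcf.continuousOn) (hf3.trans hf4.symm)
  -- the two monotonicity intervals
  obtain ⟨α, β, hc₁α, hαr₂, hr₂β, hβc₂, hα0, hβ0, hne₁⟩ :=
    mynd_interval_around_root hcf' hc₁mem.2 hc₂mem.1 hc₁ hc₂ (h2 r₂ hf2)
  obtain ⟨γ, δ, hc₂γ, hγr₃, hr₃δ, hδc₃, hγ0, hδ0, hne₂⟩ :=
    mynd_interval_around_root hcf' hc₂mem.2 hc₃mem.1 hc₂ hc₃ (h2 r₃ hf3)
  have hβγ : β ≤ γ := le_trans hβc₂ hc₂γ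
  obtain ⟨hcont₁, hsurj₁⟩ :=
    mynd_key_interval hC htop hbot ⟨hαr₂, hr₂β⟩ hf2 hα0 hβ0 hne₁
  obtain ⟨hcont₂, hsurj₂⟩ :=
    mynd_key_interval hC htop hbot ⟨hγr₃, hr₃δ⟩ hf3 hγ0 hδ0 hne₂
  exact mynd_horseshoe (lt_trans hαr₂ hr₂β) hβγ (lt_trans hγr₃ hr₃δ)
    hcont₁ hcont₂ hsurj₁ hsurj₂

/-- If `f` is a Newton-class function, has infinite limits of opposite signs
at `±∞`, and has at least four real roots, then the set of points whose
iteration sequence under `M_f` does not converge is uncountable. -/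
theorem modNewtonFun_uncountable_divergence
    (f : ℝ → ℝ)
    (hf : NewtonClass f)
    (hlim : (Filter.Tendsto f Filter.atTop Filter.atTop ∧
              Filter.Tendsto f Filter.atBot Filter.atBot) ∨
            (Filter.Tendsto f Filter.atTop Filter.atBot ∧
              Filter.Tendsto f Filter.atBot Filter.atTop))
    (hroots : ∃ r₁ r₂ r₃ r₄ : ℝ, r₁ < r₂ ∧ r₂ < r₃ ∧ r₃ < r₄ ∧
      f r₁ = 0 ∧ f r₂ = 0 ∧ f r₃ = 0 ∧ f r₄ = 0) :
    ¬ Set.Countable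
      {a : ℝ | ¬ ∃ L : ℝ,
        Filter.Tendsto (fun n => (modNewtonFun f)^[n] a) Filter.atTop (nhds L)} := by
  rcases hlim with ⟨ht, hb⟩ | ⟨ht, hb⟩
  · exact mynd_main_case1 hf.1 hf.2.1 ht hb hroots
  · -- apply the first case to `-f`
    set g : ℝ → ℝ := fun x => -f x with hgdef
    have hgC : ContDiff ℝ 2 g := hf.1.neg
    have hgd : deriv g = fun x => -deriv f x := mynd_deriv_neg f
    have hg2 : ∀ x, g x = 0 → deriv g x ≠ 0 := by
      intro x hx
      rw [hgd]
      simpa using hf.2.1 x (by simpa [hgdef] using hx)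
    have hgt : Tendsto g atTop atTop := tendsto_neg_atBot_atTop.comp ht
    have hgb : Tendsto g atBot atBot := tendsto_neg_atTop_atBot.comp hb
    have hgroots : ∃ r₁ r₂ r₃ r₄ : ℝ, r₁ < r₂ ∧ r₂ < r₃ ∧ r₃ < r₄ ∧
        g r₁ = 0 ∧ g r₂ = 0 ∧ g r₃ = 0 ∧ g r₄ = 0 := by
      obtain ⟨r₁, r₂, r₃, r₄, h12, h23, h34, hf1, hf2, hf3, hf4⟩ := hroots
      exact ⟨r₁, r₂, r₃, r₄, h12, h23, h34, by simp [hgdef, hf1], by simp [hgdef, hf2],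
        by simp [hgdef, hf3], by simp [hgdef, hf4]⟩
    have := mynd_main_case1 hgC hg2 hgt hgb hgroots
    rwa [hgdef, mynd_modNewtonFun_neg f] at this
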